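/- Let C be an additive conjucyclic code of length n over 𝔽₄ equal to Ψ(D) for a binary cyclic code D of length 2n, and let t(x) and r(x) be the generator polynomials of Tr(C^{⊥_Tr}) and Tr(C) respectively (as cyclic codes of length n over 𝔽₂). Then Tr(C^{⊥_Tr}) ⊆ Tr(C)^⊥, i.e., every trace of a trace-dual codeword is Euclidean-orthogonal to every trace of a codeword. -/

import Mathlib

open scoped BigOperators

abbrev F2 := ZMod 2
abbrev F4 := GaloisField 2 2

noncomputable def iota : F2 →+* F4 := algebraMap F2 F4

/-- The trace map of `F4` over `F2`, viewed with values in `F4`: `tr α = α + α²`. -/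
noncomputable def tr (a : F4) : F4 := a + a ^ 2
/-- Cyclic shift: `(c₀,…,c_{m-1}) ↦ (c_{m-1},c₀,…,c_{m-2})`. -/
def cshift {α : Type*} {m : ℕ} (c : Fin m → α) : Fin m → α :=
  fun i => if _ : (i : ℕ) = 0 then c ⟨m - 1, by have := i.isLt; omega⟩
           else c ⟨(i : ℕ) - 1, by have := i.isLt; omega⟩

/-- Conjucyclic shift on `F4ⁿ`: `(c₀,…,c_{n-1}) ↦ (c̄_{n-1},c₀,…,c_{n-2})`,
where conjugation is `α ↦ α²`. -/
noncomputable def Tshift {n : ℕ} (c : Fin n → F4) : Fin n → F4 :=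
  fun i => if _ : (i : ℕ) = 0 then (c ⟨n - 1, by have := i.isLt; omega⟩) ^ 2
           else c ⟨(i : ℕ) - 1, by have := i.isLt; omega⟩

/-- The map `Ψ : F2^{2n} → F4ⁿ`, `Ψ(u)ᵢ = uᵢ + (uᵢ + u_{n+i})ω`. -/
noncomputable def Psi {n : ℕ} (ω : F4) (u : Fin (2 * n) → F2) : Fin n → F4 :=
  fun i => iota (u ⟨(i : ℕ), by have := i.isLt; omega⟩) +
    (iota (u ⟨(i : ℕ), by have := i.isLt; omega⟩) +
      iota (u ⟨n + (i : ℕ), by have := i.isLt; omega⟩)) * ω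

/-- Trace dual of a set of vectors in `F4ⁿ` w.r.t. `⟨x,y⟩ = Tr(∑ xᵢyᵢ)`. -/
noncomputable def traceDual {n : ℕ} (S : Set (Fin n → F4)) : Set (Fin n → F4) :=
  {x | ∀ c ∈ S, tr (∑ i, x i * c i) = 0}

/-- Euclidean dual of a set of vectors in `F2^m`. -/
def dualE {m : ℕ} (S : Set (Fin m → F2)) : Set (Fin m → F2) :=
  {b | ∀ a ∈ S, ∑ i, a i * b i = 0}

/-- The folding map `Φ : F2^{2n} → F2ⁿ`, `Φ(a)ᵢ = aᵢ + a_{n+i}`. -/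
def Phi {n : ℕ} (a : Fin (2 * n) → F2) : Fin n → F2 :=
  fun i => a ⟨(i : ℕ), by have := i.isLt; omega⟩ +
    a ⟨n + (i : ℕ), by have := i.isLt; omega⟩

/-- Coordinatewise trace of a vector in `F4ⁿ`. -/
noncomputable def trVec {n : ℕ} (c : Fin n → F4) : Fin n → F4 :=
  fun i => tr (c i)

section Aux

open Fin.NatCast Fin.CommRing

lemma two_eq_zero_F4 : (2 : F4) = 0 := by
  have := CharP.cast_eq_zero F4 2
  exact_mod_cast this

lemma iota_sq (t : F2) : iota t ^ 2 = iota t := by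
  rw [← map_pow]
  congr 1
  exact ZMod.pow_card t

lemma tr_sum {ι : Type*} (s : Finset ι) (f : ι → F4) :
    tr (∑ i ∈ s, f i) = ∑ i ∈ s, tr (f i) := by
  unfold tr
  rw [sum_pow_char, ← Finset.sum_add_distrib]

lemma tr_mul_idem (x e : F4) (he : e ^ 2 = e) : tr (x * e) = tr x * e := by
  unfold tr
  rw [mul_pow, he]
  ring

lemma cshift_apply {α : Type*} {m : ℕ} (hm : 2 ≤ m) (a : Fin m → α) (i : Fin m) :
    haveI : NeZero m := ⟨by omega⟩
    cshift a i = a (i - 1) := by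
  haveI : NeZero m := ⟨by omega⟩
  have h1 : (1 : ℕ) % m = 1 := Nat.mod_eq_of_lt (by omega)
  have hi := i.isLt
  unfold cshift
  split_ifs with h
  · congr 1
    ext
    simp only [Fin.sub_def, Fin.val_one', h1, h, Nat.add_zero]
    first
    | (apply Nat.mod_eq_of_lt; omega)
    | (symm; apply Nat.mod_eq_of_lt; omega)
  · congr 1
    ext
    simp only [Fin.sub_def, Fin.val_one', h1]
    have hrw : m - 1 + (i : ℕ) = m + ((i : ℕ) - 1) := by omega
    rw [hrw, Nat.add_mod_left]
    first
    | (apply Nat.mod_eq_of_lt; omega)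
    | (symm; apply Nat.mod_eq_of_lt; omega)

lemma cshift_iter_apply {α : Type*} {m : ℕ} (hm : 2 ≤ m) (k : ℕ) (a : Fin m → α) (i : Fin m) :
    haveI : NeZero m := ⟨by omega⟩
    cshift^[k] a i = a (i - (k : Fin m)) := by
  haveI : NeZero m := ⟨by omega⟩
  induction k generalizing i with
  | zero => simp
  | succ k ih =>
    rw [Function.iterate_succ_apply', cshift_apply hm, ih]
    congr 1
    push_cast
    ring

lemma cshift_iter_mem {n : ℕ} (D : Submodule F2 (Fin (2 * n) → F2))
    (hcyc : ∀ a ∈ D, cshift a ∈ D) (k : ℕ) {a : Fin (2 * n) → F2} (ha : a ∈ D) :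
    cshift^[k] a ∈ D := by
  induction k with
  | zero => simpa
  | succ k ih => rw [Function.iterate_succ_apply']; exact hcyc _ ih

theorem stmt18aux (n : ℕ) (ω : F4) (hω : ω ^ 2 = ω + 1)
    (D : Submodule F2 (Fin (2 * n) → F2)) (hcyc : ∀ a ∈ D, cshift a ∈ D) :
    ∀ x ∈ traceDual (Psi ω '' (D : Set (Fin (2 * n) → F2))),
      ∀ c ∈ Psi ω '' (D : Set (Fin (2 * n) → F2)),
        ∑ i, tr (x i) * tr (c i) = 0 := by
  intro x hx c hc
  rcases Nat.eq_zero_or_pos n with hn | hn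
  · subst hn; simp
  obtain ⟨b, hb, rfl⟩ := hc
  have hm : 2 ≤ 2 * n := by omega
  haveI : NeZero (2 * n) := ⟨by omega⟩
  set u : Fin (2 * n) → F2 := b + cshift^[n] b with hu
  have hud : u ∈ D := D.add_mem hb (cshift_iter_mem D hcyc n hb)
  -- index computations
  have hval : ((n : Fin (2 * n)) : ℕ) = n := by
    simp [Fin.val_natCast, Nat.mod_eq_of_lt (by omega : n < 2 * n)]
  have hidx1 : ∀ i : Fin n, ((⟨(i : ℕ), by omega⟩ : Fin (2 * n)) - (n : Fin (2 * n))) =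
      (⟨n + (i : ℕ), by omega⟩ : Fin (2 * n)) := by
    intro i
    have hi := i.isLt
    ext
    simp only [Fin.sub_def, hval]
    have hrw : 2 * n - n + (i : ℕ) = n + (i : ℕ) := by omega
    rw [hrw]
    first
    | (apply Nat.mod_eq_of_lt; omega)
    | (symm; apply Nat.mod_eq_of_lt; omega)
  have hidx2 : ∀ i : Fin n, ((⟨n + (i : ℕ), by omega⟩ : Fin (2 * n)) - (n : Fin (2 * n))) =
      (⟨(i : ℕ), by omega⟩ : Fin (2 * n)) := by
    intro i
    have hi := i.isLt
    ext
    simp only [Fin.sub_def, hval]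
    have hrw : 2 * n - n + (n + (i : ℕ)) = 2 * n + (i : ℕ) := by omega
    rw [hrw, Nat.add_mod_left]
    first
    | (apply Nat.mod_eq_of_lt; omega)
    | (symm; apply Nat.mod_eq_of_lt; omega)
  have h2 : (2 : F4) = 0 := two_eq_zero_F4
  have hu1 : ∀ i : Fin n, u ⟨(i : ℕ), by omega⟩ =
      b ⟨(i : ℕ), by omega⟩ + b ⟨n + (i : ℕ), by omega⟩ := by
    intro i
    simp only [hu, Pi.add_apply, cshift_iter_apply hm, hidx1 i]
  have hu2 : ∀ i : Fin n, u ⟨n + (i : ℕ), by omega⟩ =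
      b ⟨(i : ℕ), by omega⟩ + b ⟨n + (i : ℕ), by omega⟩ := by
    intro i
    simp only [hu, Pi.add_apply, cshift_iter_apply hm, hidx2 i]
    ring
  have hPsiu : ∀ i : Fin n, Psi ω u i = iota (u ⟨(i : ℕ), by omega⟩) := by
    intro i
    unfold Psi
    rw [hu1 i, hu2 i]
    linear_combination (iota (b ⟨(i : ℕ), by omega⟩ + b ⟨n + (i : ℕ), by omega⟩)) * ω * h2
  have key : ∀ i : Fin n, tr (Psi ω b i) = iota (u ⟨(i : ℕ), by omega⟩) := by
    intro i
    unfold Psi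
    rw [hu1 i]
    simp only [map_add]
    set p := iota (b ⟨(i : ℕ), by omega⟩) with hp
    set q := iota (b ⟨n + (i : ℕ), by omega⟩) with hq
    have hps : p ^ 2 = p := iota_sq _
    have hqs : q ^ 2 = q := iota_sq _
    unfold tr
    rw [CharTwo.add_sq, mul_pow, CharTwo.add_sq, hps, hqs, hω]
    linear_combination (p + (p + q) * ω) * h2
  have hmem : Psi ω u ∈ Psi ω '' (D : Set (Fin (2 * n) → F2)) := ⟨u, hud, rfl⟩
  have hxu := hx (Psi ω u) hmem
  calc ∑ i, tr (x i) * tr (Psi ω b i)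
      = ∑ i, tr (x i * Psi ω u i) := by
        refine Finset.sum_congr rfl fun i _ => ?_
        rw [key i, hPsiu i, tr_mul_idem _ _ (iota_sq _)]
    _ = tr (∑ i, x i * Psi ω u i) := (tr_sum _ _).symm
    _ = 0 := hxu

end Aux


/-- for `C = Ψ(D)` with `D` a binary cyclic code of length `2n`,
`Tr(C^{⊥Tr}) ⊆ Tr(C)^⊥`: every trace of a trace-dual codeword is Euclidean-orthogonal
to every trace of a codeword. -/
theorem stmt18 (n : ℕ) (ω : F4) (hω : ω ^ 2 = ω + 1)
    (D : Submodule F2 (Fin (2 * n) → F2)) (hcyc : ∀ a ∈ D, cshift a ∈ D) :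
    ∀ x ∈ traceDual (Psi ω '' (D : Set (Fin (2 * n) → F2))),
      ∀ c ∈ Psi ω '' (D : Set (Fin (2 * n) → F2)),
        ∑ i, tr (x i) * tr (c i) = 0 := by
  exact stmt18aux n ω hω D hcyc
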